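/- For v > -1 real and nonnegative integer n, the terminating ₂F₁ identity ₂F₁(-n/2, -n/2+1/2; v+3/2; 1/c²) = ((√(c²-1))/c)^n · (n! Γ(2v+2)/Γ(n+2v+2)) · C^{v+1}_n(c/√(c²-1)) holds for all real c > 1. -/

import Mathlib

open Finset

/-- Pochhammer (rising factorial) `(a)_k`. -/
noncomputable def poch (a : ℝ) (k : ℕ) : ℝ := ∏ i ∈ Finset.range k, (a + i)

/-- Gegenbauer polynomial `C^λ_n(z)`. -/
noncomputable def gegenbauer (ρ : ℝ) (n : ℕ) (z : ℝ) : ℝ :=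
  ∑ k ∈ Finset.range (n / 2 + 1),
    (-1 : ℝ) ^ k * Real.Gamma (ρ + n - k) /
      (Real.Gamma ρ * k.factorial * (n - 2 * k).factorial) * (2 * z) ^ (n - 2 * k)

/-- The terminating hypergeometric polynomial
`₂F₁(-n/2, (1-n)/2; c; x)` (a polynomial of degree `⌊n/2⌋` in `x`). -/
noncomputable def F21half (n : ℕ) (c x : ℝ) : ℝ :=
  ∑ k ∈ Finset.range (n / 2 + 1),
    poch (-(n : ℝ) / 2) k * poch ((1 - (n : ℝ)) / 2) k / (poch c k * k.factorial) * x ^ k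

lemma poch_zero (a : ℝ) : poch a 0 = 1 := by simp [poch]

lemma poch_succ (a : ℝ) (k : ℕ) : poch a (k+1) = poch a k * (a + k) := by
  simp [poch, Finset.prod_range_succ]

lemma poch_add (a : ℝ) (r t : ℕ) : poch a (r + t) = poch a r * poch (a + r) t := by
  simp only [poch, Finset.prod_range_add]
  congr 1
  refine Finset.prod_congr rfl fun i _ => ?_
  push_cast; ring

lemma poch_pos {a : ℝ} (ha : 0 < a) (k : ℕ) : 0 < poch a k := by
  refine Finset.prod_pos fun i _ => by positivity

lemma Gamma_poch {a : ℝ} (ha : 0 < a) (k : ℕ) :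
    Real.Gamma (a + k) = Real.Gamma a * poch a k := by
  induction k with
  | zero => simp [poch_zero]
  | succ k ih =>
    have h1 : a + (k+1 : ℕ) = (a + k) + 1 := by push_cast; ring
    rw [h1, Real.Gamma_add_one (by positivity), ih, poch_succ]; ring

lemma poch_dup (a : ℝ) (j : ℕ) :
    poch (2*a) (2*j) = 4^j * poch a j * poch (a + 1/2) j := by
  induction j with
  | zero => simp [poch_zero]
  | succ j ih =>
    have h : 2*(j+1) = (2*j) + 1 + 1 := by ring
    rw [h, poch_succ, poch_succ, ih, poch_succ, poch_succ]
    push_cast; ring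

lemma poch_half_mul (n j : ℕ) (h : 2*j ≤ n) :
    poch (-(n : ℝ) / 2) j * poch ((1 - (n : ℝ)) / 2) j
      = (n.factorial : ℝ) / ((n - 2*j).factorial * 4^j) := by
  induction j with
  | zero =>
    simp only [poch_zero, one_mul, Nat.mul_zero, Nat.sub_zero, pow_zero, mul_one]
    rw [div_self (Nat.cast_ne_zero.2 n.factorial_ne_zero)]
  | succ j ih =>
    have h2 : 2*j ≤ n := by omega
    obtain ⟨b, hb⟩ : ∃ b, n - 2*j = b + 2 := ⟨n - 2*j - 2, by omega⟩
    have hb2 : n - 2*(j+1) = b := by omega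
    have hcast : ((n - 2*j : ℕ) : ℝ) = (n : ℝ) - 2*j := by
      push_cast [Nat.cast_sub h2]; ring
    rw [poch_succ, poch_succ]
    rw [show poch (-(n:ℝ)/2) j * (-(n:ℝ)/2 + j) * (poch ((1-(n:ℝ))/2) j * ((1-(n:ℝ))/2 + j))
        = poch (-(n:ℝ)/2) j * poch ((1-(n:ℝ))/2) j * ((-(n:ℝ)/2 + j) * ((1-(n:ℝ))/2 + j)) by ring,
      ih h2, hb2]
    have e2 : ((n:ℝ) - 2*j) = (b : ℝ) + 2 := by rw [← hcast, hb]; push_cast; ring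
    have hfac : (((n - 2*j).factorial : ℕ) : ℝ) = ((b+2) * (b+1)) * (b.factorial : ℝ) := by
      rw [hb]; push_cast [Nat.factorial_succ]; ring
    have hbne : (b.factorial : ℝ) ≠ 0 := Nat.cast_ne_zero.2 b.factorial_ne_zero
    have hn : (n:ℝ) = (b:ℝ) + 2 + 2*(j:ℝ) := by linarith [e2]
    field_simp
    rw [hfac, hn]
    ring

noncomputable def aa (l : ℝ) (M i : ℕ) : ℝ :=
  (-1)^i * poch l (M - i) * 2^(M - 2*i) / (i.factorial * (M - 2*i).factorial)

noncomputable def tt (l : ℝ) (M i : ℕ) : ℝ :=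
  (-1)^i * poch l (M + 1 - i) * 2^(M + 2 - 2*i) * i / (i.factorial * (M + 1 - 2*i).factorial)

lemma step_lt (l : ℝ) (M i : ℕ) (h : 2*i < M) :
    ((M:ℝ)+1) * aa l (M+1) i - (2*l + M) * aa l M i = tt l M i - tt l M (i+1) := by
  obtain ⟨b, hb⟩ : ∃ b, M = 2*i + b + 1 := ⟨M - 2*i - 1, by omega⟩
  subst hb
  have e1 : 2*i + b + 1 - i = (i + b) + 1 := by omega
  have e2 : 2*i + b + 1 + 1 - i = (i + b + 1) + 1 := by omega
  have e3 : 2*i + b + 1 - 2*i = b + 1 := by omega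
  have e4 : 2*i + b + 1 + 1 - 2*i = b + 2 := by omega
  have e5 : 2*i + b + 1 + 1 - (i+1) = (i + b) + 1 := by omega
  have e6 : 2*i + b + 1 + 2 - 2*i = b + 3 := by omega
  have e7 : 2*i + b + 1 + 1 - 2*(i+1) = b := by omega
  have e8 : 2*i + b + 1 + 2 - 2*(i+1) = b + 1 := by omega
  simp only [aa, tt, e1, e2, e3, e4, e5, e6, e7, e8]
  rw [poch_succ, poch_succ]
  have hbne : (b.factorial : ℝ) ≠ 0 := Nat.cast_ne_zero.2 b.factorial_ne_zero
  have hine : (i.factorial : ℝ) ≠ 0 := Nat.cast_ne_zero.2 i.factorial_ne_zero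
  simp only [Nat.factorial_succ, pow_succ]
  push_cast
  field_simp
  ring

lemma step_even (l : ℝ) (i : ℕ) :
    ((2*i:ℝ)+1) * aa l (2*i+1) i - (2*l + 2*i) * aa l (2*i) i = tt l (2*i) i := by
  have e1 : 2*i - i = i := by omega
  have e2 : 2*i + 1 - i = i + 1 := by omega
  have e3 : 2*i - 2*i = 0 := by omega
  have e4 : 2*i + 1 - 2*i = 1 := by omega
  have e5 : 2*i + 2 - 2*i = 2 := by omega
  simp only [aa, tt, e1, e2, e3, e4, e5]
  rw [poch_succ]
  have hine : (i.factorial : ℝ) ≠ 0 := Nat.cast_ne_zero.2 i.factorial_ne_zero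
  simp only [Nat.factorial_one, Nat.factorial_zero, Nat.factorial_two]
  push_cast
  field_simp
  ring

lemma step_odd (l : ℝ) (i : ℕ) :
    ((2*i+1:ℝ)+1) * aa l (2*i+1+1) (i+1) = tt l (2*i+1) (i+1) := by
  have e1 : 2*i+1+1 - (i+1) = i + 1 := by omega
  have e2 : 2*i+1+1 - 2*(i+1) = 0 := by omega
  have e3 : 2*i+1+2 - 2*(i+1) = 1 := by omega
  simp only [aa, tt, e1, e2, e3]
  have hine : ((i+1).factorial : ℝ) ≠ 0 := Nat.cast_ne_zero.2 (i+1).factorial_ne_zero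
  simp only [Nat.factorial_zero, Nat.factorial_one]
  push_cast
  field_simp
  ring

noncomputable def SS (l : ℝ) (M : ℕ) : ℝ := ∑ i ∈ Finset.range (M/2 + 1), aa l M i

lemma SS_rec (l : ℝ) (M : ℕ) : ((M:ℝ)+1) * SS l (M+1) = (2*l + M) * SS l M := by
  rw [← sub_eq_zero]
  rcases Nat.even_or_odd M with ⟨m, hm⟩ | ⟨m, hm⟩
  · have hM : M = 2*m := by omega
    subst hM
    have h1 : (2*m + 1)/2 = m := by omega
    have h2 : (2*m)/2 = m := by omega
    rw [SS, SS, h1, h2, Finset.mul_sum, Finset.mul_sum, ← Finset.sum_sub_distrib]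
    rw [Finset.sum_range_succ]
    have hlast : (((2*m:ℕ):ℝ)+1) * aa l (2*m+1) m - (2*l + ((2*m:ℕ):ℝ)) * aa l (2*m) m
        = tt l (2*m) m := by
      have := step_even l m
      push_cast at this ⊢
      convert this using 3 <;> push_cast <;> ring
    rw [hlast]
    have hmain : ∀ i ∈ Finset.range m,
        (((2*m:ℕ):ℝ)+1) * aa l (2*m+1) i - (2*l + ((2*m:ℕ):ℝ)) * aa l (2*m) i
          = tt l (2*m) i - tt l (2*m) (i+1) := by
      intro i hi
      have hi' : i < m := Finset.mem_range.1 hi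
      have := step_lt l (2*m) i (by omega)
      push_cast at this ⊢
      convert this using 3 <;> push_cast <;> ring
    rw [Finset.sum_congr rfl hmain, Finset.sum_range_sub']
    have ht0 : tt l (2*m) 0 = 0 := by simp [tt]
    rw [ht0]
    ring
  · have hM : M = 2*m+1 := by omega
    subst hM
    have h1 : (2*m+1+1)/2 = m+1 := by omega
    have h2 : (2*m+1)/2 = m := by omega
    rw [SS, SS, h1, h2, Finset.mul_sum, Finset.mul_sum]
    rw [Finset.sum_range_succ (fun i => (((2*m+1:ℕ):ℝ)+1) * aa l (2*m+1+1) i)]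
    rw [add_sub_right_comm, ← Finset.sum_sub_distrib]
    have hmain : ∀ i ∈ Finset.range (m+1),
        (((2*m+1:ℕ):ℝ)+1) * aa l (2*m+1+1) i - (2*l + ((2*m+1:ℕ):ℝ)) * aa l (2*m+1) i
          = tt l (2*m+1) i - tt l (2*m+1) (i+1) := by
      intro i hi
      have hi' : i < m+1 := Finset.mem_range.1 hi
      have := step_lt l (2*m+1) i (by omega)
      push_cast at this ⊢
      convert this using 3 <;> push_cast <;> ring
    rw [Finset.sum_congr rfl hmain, Finset.sum_range_sub']
    have hext : (((2*m+1:ℕ):ℝ)+1) * aa l (2*m+1+1) (m+1) = tt l (2*m+1) (m+1) := by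
      have := step_odd l m
      push_cast at this ⊢
      convert this using 3 <;> push_cast <;> ring
    have ht0 : tt l (2*m+1) 0 = 0 := by simp [tt]
    rw [ht0, hext]
    ring

theorem sumA (l : ℝ) (M : ℕ) : SS l M = poch (2*l) M / M.factorial := by
  induction M with
  | zero => simp [SS, aa, poch_zero]
  | succ M ih =>
    have hrec := SS_rec l M
    have hM1 : ((M:ℝ)+1) ≠ 0 := by positivity
    have hS : SS l (M+1) = (2*l + M) * SS l M / ((M:ℝ)+1) := by
      field_simp at hrec ⊢; linarith [hrec]
    rw [hS, ih, poch_succ, Nat.factorial_succ]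
    push_cast
    field_simp

set_option maxHeartbeats 2000000 in
theorem stmt18 (v : ℝ) (hv : -1 < v) (n : ℕ) (c : ℝ) (hc : 1 < c) :
    F21half n (v + 3 / 2) (1 / c ^ 2) =
      (Real.sqrt (c ^ 2 - 1) / c) ^ n *
        ((n.factorial : ℝ) * Real.Gamma (2 * v + 2) / Real.Gamma ((n : ℝ) + 2 * v + 2)) *
        gegenbauer (v + 1) n (c / Real.sqrt (c ^ 2 - 1)) := by
  have hc0 : (0:ℝ) < c := by linarith
  have hcne : c ≠ 0 := ne_of_gt hc0
  have hc2 : (0:ℝ) < c^2 - 1 := by nlinarith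
  set s : ℝ := Real.sqrt (c^2 - 1) with hsdef
  have hs0 : 0 < s := Real.sqrt_pos.2 hc2
  have hs2 : s^2 = c^2 - 1 := Real.sq_sqrt hc2.le
  have hsne : s ≠ 0 := ne_of_gt hs0
  have hv1 : (0:ℝ) < v + 1 := by linarith
  have hv2 : (0:ℝ) < 2*v + 2 := by linarith
  set x : ℝ := 1/c^2 with hx
  have hA : (n.factorial:ℝ) * Real.Gamma (2*v+2) / Real.Gamma ((n:ℝ)+2*v+2)
      = (n.factorial:ℝ) / poch (2*v+2) n := by
    rw [show (n:ℝ)+2*v+2 = (2*v+2) + (n:ℕ) by push_cast; ring, Gamma_poch hv2]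
    have hG : Real.Gamma (2*v+2) ≠ 0 := (Real.Gamma_pos_of_pos hv2).ne'
    have hp : poch (2*v+2) n ≠ 0 := (poch_pos hv2 n).ne'
    field_simp
  set A : ℝ := (n.factorial:ℝ) / poch (2*v+2) n with hAdef
  rw [gegenbauer, F21half, hA, Finset.mul_sum]
  have hmain : ∀ k ∈ Finset.range (n/2+1),
      (s/c)^n * A * ((-1:ℝ)^k * Real.Gamma ((v+1) + n - k) /
          (Real.Gamma (v+1) * k.factorial * (n-2*k).factorial) * (2*(c/s))^(n-2*k))
      = ∑ j ∈ Finset.range (n/2+1),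
          A * ((-1:ℝ)^k * poch (v+1) (n-k) * 2^(n-2*k) / (k.factorial * (n-2*k).factorial))
            * ((k.choose j : ℝ) * (-x)^j) := by
    intro k hk
    rw [Finset.mem_range] at hk
    have h2k : 2*k ≤ n := by omega
    have hkn : k ≤ n := by omega
    have hG : Real.Gamma ((v+1) + (n:ℝ) - k) = Real.Gamma (v+1) * poch (v+1) (n-k) := by
      rw [show (v+1) + (n:ℝ) - (k:ℝ) = (v+1) + ((n-k:ℕ):ℝ) by push_cast [hkn]; ring]
      exact Gamma_poch hv1 _
    have hpow : (s/c)^n * (2*(c/s))^(n-2*k) = 2^(n-2*k) * (1-x)^k := by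
      have hsc : ((s/c)^2) = 1 - x := by
        rw [div_pow, hs2, hx]; field_simp
      have h1 : (s/c)^n = (s/c)^(n-2*k) * ((s/c)^2)^k := by
        rw [← pow_mul, ← pow_add]; congr 1; omega
      rw [h1, hsc,
        show (s/c)^(n-2*k) * (1-x)^k * (2*(c/s))^(n-2*k)
          = ((s/c) * (2*(c/s)))^(n-2*k) * (1-x)^k by rw [mul_pow]; ring,
        show (s/c) * (2*(c/s)) = 2 by field_simp]
    have hexp : (1-x)^k = ∑ j ∈ Finset.range (n/2+1), (-x)^j * (k.choose j : ℝ) := by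
      rw [show (1-x) = (-x) + 1 by ring, add_pow]
      simp only [one_pow, mul_one]
      apply Finset.sum_subset
      · exact Finset.range_subset_range.2 (by omega)
      · intro j _ hj
        rw [Finset.mem_range, not_lt] at hj
        simp [Nat.choose_eq_zero_of_lt (by omega : k < j)]
    have hGne : Real.Gamma (v+1) ≠ 0 := (Real.Gamma_pos_of_pos hv1).ne'
    calc (s/c)^n * A * ((-1:ℝ)^k * Real.Gamma ((v+1) + n - k) /
            (Real.Gamma (v+1) * k.factorial * (n-2*k).factorial) * (2*(c/s))^(n-2*k))
        = A * ((-1:ℝ)^k * poch (v+1) (n-k) / (k.factorial * (n-2*k).factorial))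
            * ((s/c)^n * (2*(c/s))^(n-2*k)) := by
          rw [hG]
          have hk1 : ((k.factorial:ℕ):ℝ) ≠ 0 := Nat.cast_ne_zero.2 k.factorial_ne_zero
          have hk2 : (((n-2*k).factorial:ℕ):ℝ) ≠ 0 := Nat.cast_ne_zero.2 (n-2*k).factorial_ne_zero
          field_simp
      _ = A * ((-1:ℝ)^k * poch (v+1) (n-k) * 2^(n-2*k) / (k.factorial * (n-2*k).factorial))
            * (1-x)^k := by
          rw [hpow]; ring
      _ = _ := by
          rw [hexp, Finset.mul_sum]
          exact Finset.sum_congr rfl fun j _ => by ring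
  rw [Finset.sum_congr rfl hmain, Finset.sum_comm]
  apply Finset.sum_congr rfl
  intro j hj
  rw [Finset.mem_range] at hj
  have h2j : 2*j ≤ n := by omega
  set p : ℕ := n - 2*j with hpdef
  have hcol : ∀ i ∈ Finset.range (p/2+1),
      A * ((-1:ℝ)^(j+i) * poch (v+1) (n-(j+i)) * 2^(n-2*(j+i)) /
          ((j+i).factorial * (n-2*(j+i)).factorial)) * (((j+i).choose j : ℝ) * (-x)^j)
      = (A * poch (v+1) j * x^j / j.factorial) * aa (v+1+j) p i := by
    intro i hi
    rw [Finset.mem_range] at hi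
    have hip : i ≤ p := by omega
    have e1 : n - (j+i) = j + (p - i) := by omega
    have e2 : n - 2*(j+i) = p - 2*i := by omega
    rw [e1, e2, poch_add]
    have hcf : (((j+i).choose j : ℕ) : ℝ) * (j.factorial : ℝ) * (i.factorial : ℝ)
        = ((j+i).factorial : ℝ) := by
      rw [← Nat.cast_mul, ← Nat.cast_mul]
      norm_cast
      have := Nat.choose_mul_factorial_mul_factorial (Nat.le_add_right j i)
      simpa using this
    have hsign : ((-1:ℝ))^(j+i) * (-x)^j = (-1)^i * x^j := by
      rw [neg_pow x j, show ((-1:ℝ))^(j+i) * ((-1)^j * x^j) = ((-1:ℝ))^((j+i)+j) * x^j by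
        rw [pow_add ((-1:ℝ)) (j+i) j]; ring,
        show (j+i)+j = 2*j+i by ring, pow_add, pow_mul, neg_one_sq, one_pow, one_mul]
    rw [aa]
    have hjf : ((j.factorial:ℕ):ℝ) ≠ 0 := Nat.cast_ne_zero.2 j.factorial_ne_zero
    have hif : ((i.factorial:ℕ):ℝ) ≠ 0 := Nat.cast_ne_zero.2 i.factorial_ne_zero
    have hjif : (((j+i).factorial:ℕ):ℝ) ≠ 0 := Nat.cast_ne_zero.2 (j+i).factorial_ne_zero
    have hpf : (((p-2*i).factorial:ℕ):ℝ) ≠ 0 := Nat.cast_ne_zero.2 (p-2*i).factorial_ne_zero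
    rw [← hcf]
    have hchoose : (((j+i).choose j : ℕ) : ℝ) ≠ 0 := by
      have : 0 < (j+i).choose j := Nat.choose_pos (Nat.le_add_right j i)
      exact_mod_cast this.ne'
    field_simp
    linear_combination (A * (poch (v+1) j * poch (v+1+(j:ℝ)) (p-i))) * hsign
  -- split the k-sum at j
  have hsplit : (∑ k ∈ Finset.range (n/2+1),
        A * ((-1:ℝ)^k * poch (v+1) (n-k) * 2^(n-2*k) / (k.factorial * (n-2*k).factorial))
          * ((k.choose j : ℝ) * (-x)^j))
      = ∑ i ∈ Finset.range (p/2+1),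
        A * ((-1:ℝ)^(j+i) * poch (v+1) (n-(j+i)) * 2^(n-2*(j+i)) /
            ((j+i).factorial * (n-2*(j+i)).factorial)) * (((j+i).choose j : ℝ) * (-x)^j) := by
    rw [Finset.range_eq_Ico, ← Finset.sum_Ico_consecutive _ (Nat.zero_le j) (by omega : j ≤ n/2+1)]
    have hzero : (∑ k ∈ Finset.Ico 0 j,
        A * ((-1:ℝ)^k * poch (v+1) (n-k) * 2^(n-2*k) / (k.factorial * (n-2*k).factorial))
          * ((k.choose j : ℝ) * (-x)^j)) = 0 := by
      apply Finset.sum_eq_zero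
      intro k hk
      rw [Finset.mem_Ico] at hk
      simp [Nat.choose_eq_zero_of_lt hk.2]
    rw [hzero, zero_add, Finset.sum_Ico_eq_sum_range]
    have hr : n/2 + 1 - j = p/2 + 1 := by omega
    exact Finset.sum_congr (by rw [hr, Finset.range_eq_Ico]) (fun i _ => rfl)
  rw [hsplit, Finset.sum_congr rfl hcol, ← Finset.mul_sum]
  have hSS : (∑ i ∈ Finset.range (p/2+1), aa (v+1+j) p i) = SS (v+1+(j:ℝ)) p := rfl
  rw [hSS, sumA]
  -- final scalar identity
  rw [poch_half_mul n j h2j]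
  have hnp : n = 2*j + p := by omega
  have hpochn : poch (2*v+2) n = 4^j * poch (v+1) j * poch (v+3/2) j * poch (2*(v+1+(j:ℝ))) p := by
    rw [hnp, poch_add, show (2*v+2) = 2*(v+1) by ring, poch_dup]
    rw [show v+1+1/2 = v+3/2 by ring]
    congr 2
    push_cast; ring
  have hpp : ((n-2*j).factorial : ℝ) = (p.factorial : ℝ) := by rw [hpdef]
  rw [hAdef, hpochn, hpp]
  have h1 : poch (v+1) j ≠ 0 := (poch_pos hv1 j).ne'
  have h2 : poch (v+3/2) j ≠ 0 := (poch_pos (by linarith : (0:ℝ) < v+3/2) j).ne'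
  have h3 : poch (2*(v+1+(j:ℝ))) p ≠ 0 := (poch_pos (by positivity) p).ne'
  have h4 : ((j.factorial:ℕ):ℝ) ≠ 0 := Nat.cast_ne_zero.2 j.factorial_ne_zero
  have h5 : ((p.factorial:ℕ):ℝ) ≠ 0 := Nat.cast_ne_zero.2 p.factorial_ne_zero
  generalize poch (v+1) j = P1 at h1 ⊢
  generalize poch (v+3/2) j = P2 at h2 ⊢
  generalize poch (2*(v+1+(j:ℝ))) p = P3 at h3 ⊢
  have h8 : (4:ℝ)^j ≠ 0 := by positivity
  field_simp
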